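/- Let A, B ⊆ B(H) be C*-algebras with A ⊆_γ B, and suppose that for all x ∈ B(H), d(x, A') ≤ k·‖ad(x)|_A‖ (property LD_k). Then B' ⊆_{2kγ} A', i.e. for every y ∈ B' there exists z ∈ A' with ‖y − z‖ ≤ 2kγ‖y‖. -/

import Mathlib

open Filter Topology

variable {H : Type*} [NormedAddCommGroup H] [InnerProductSpace ℂ H] [CompleteSpace H]

/-- The norm of the inner derivation `ad(x) : a ↦ x*a - a*x` restricted to a subset
`S ⊆ B(H)`. -/
noncomputable def derivRestrictNorm (S : Set (H →L[ℂ] H)) (x : H →L[ℂ] H) : ℝ :=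
  sSup ((fun a => ‖x * a - a * x‖) '' (S ∩ Metric.closedBall 0 1))

/-- The local distance property `LD_k` for a subset `S ⊆ B(H)`. -/
def HasLD (S : Set (H →L[ℂ] H)) (k : ℝ) : Prop :=
  ∀ x : H →L[ℂ] H, Metric.infDist x (Set.centralizer S) ≤ k * derivRestrictNorm S x

local notation "⟪" x ", " y "⟫" => @inner ℂ _ _ x y

/-- A bounded sequence of complex numbers converges along any ultrafilter. -/
private lemma ulim_tendsto (U : Ultrafilter ℕ) (f : ℕ → ℂ) (M : ℝ) (h : ∀ n, ‖f n‖ ≤ M) :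
    Tendsto f (U : Filter ℕ) (𝓝 (limUnder (U : Filter ℕ) f)) := by
  have hc : IsCompact (Metric.closedBall (0 : ℂ) M) := isCompact_closedBall _ _
  have hmem : Metric.closedBall (0 : ℂ) M ∈ Filter.map f (U : Filter ℕ) := by
    refine Filter.mem_map.2 (Filter.univ_mem' fun n => ?_)
    simpa [Metric.mem_closedBall, dist_zero_right] using h n
  obtain ⟨l, -, hl⟩ := hc.ultrafilter_le_nhds (U.map f) (Filter.le_principal_iff.2 hmem)
  have ht : Tendsto f (U : Filter ℕ) (𝓝 l) := hl
  rwa [ht.limUnder_eq]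

/-- If a point can be approximated within `c + 1/(n+1)` by elements of the centralizer of `S`
for every `n`, then it can be approximated within `c` (a weak-limit / ultrafilter argument). -/
private lemma exists_commuting_approx (S : Set (H →L[ℂ] H)) (y : H →L[ℂ] H) (c : ℝ)
    (hc : 0 ≤ c)
    (hz : ∀ n : ℕ, ∃ z ∈ Set.centralizer S, ‖y - z‖ ≤ c + 1 / (n + 1)) :
    ∃ z ∈ Set.centralizer S, ‖y - z‖ ≤ c := by
  choose zs hzs hzn using hz
  set U : Ultrafilter ℕ := Ultrafilter.of atTop with hU
  have hUle : (U : Filter ℕ) ≤ atTop := Ultrafilter.of_le _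
  set M : ℝ := ‖y‖ + (c + 1) with hM
  have hM0 : 0 ≤ M := by positivity
  have hMz : ∀ n, ‖zs n‖ ≤ M := by
    intro n
    have h1 : ‖zs n‖ ≤ ‖y - zs n‖ + ‖y‖ := by
      calc ‖zs n‖ = ‖y - (y - zs n)‖ := by rw [sub_sub_cancel]
        _ ≤ ‖y‖ + ‖y - zs n‖ := norm_sub_le _ _
        _ = ‖y - zs n‖ + ‖y‖ := by ring
    have h2 : (1 : ℝ) / (n + 1) ≤ 1 := by
      rw [div_le_one (by positivity)]
      linarith [Nat.cast_nonneg (α := ℝ) n]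
    have := hzn n
    simp only [hM]; linarith
  have hib : ∀ (ξ η : H) (n : ℕ), ‖⟪zs n ξ, η⟫‖ ≤ M * ‖ξ‖ * ‖η‖ := by
    intro ξ η n
    calc ‖⟪zs n ξ, η⟫‖ ≤ ‖zs n ξ‖ * ‖η‖ := norm_inner_le_norm _ _
      _ ≤ (M * ‖ξ‖) * ‖η‖ := by
          have h1 : ‖zs n ξ‖ ≤ ‖zs n‖ * ‖ξ‖ := (zs n).le_opNorm ξ
          have h2 : ‖zs n‖ * ‖ξ‖ ≤ M * ‖ξ‖ :=
            mul_le_mul_of_nonneg_right (hMz n) (norm_nonneg _)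
          exact mul_le_mul_of_nonneg_right (h1.trans h2) (norm_nonneg _)
      _ = M * ‖ξ‖ * ‖η‖ := by ring
  have key : ∀ ξ η : H, Tendsto (fun n => ⟪zs n ξ, η⟫) (U : Filter ℕ)
      (𝓝 (limUnder (U : Filter ℕ) fun n => ⟪zs n ξ, η⟫)) := fun ξ η =>
    ulim_tendsto U _ (M * ‖ξ‖ * ‖η‖) (hib ξ η)
  -- the limiting functional, for each ξ
  have hLadd : ∀ ξ η η' : H,
      limUnder (U : Filter ℕ) (fun n => ⟪zs n ξ, η + η'⟫) =
        limUnder (U : Filter ℕ) (fun n => ⟪zs n ξ, η⟫) +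
          limUnder (U : Filter ℕ) (fun n => ⟪zs n ξ, η'⟫) := by
    intro ξ η η'
    refine tendsto_nhds_unique (key ξ (η + η')) ?_
    simpa [inner_add_right] using (key ξ η).add (key ξ η')
  have hLsmul : ∀ (ξ : H) (r : ℂ) (η : H),
      limUnder (U : Filter ℕ) (fun n => ⟪zs n ξ, r • η⟫) =
        r * limUnder (U : Filter ℕ) (fun n => ⟪zs n ξ, η⟫) := by
    intro ξ r η
    refine tendsto_nhds_unique (key ξ (r • η)) ?_
    simpa [inner_smul_right] using (key ξ η).const_mul r
  have hLbound : ∀ ξ η : H,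
      ‖limUnder (U : Filter ℕ) (fun n => ⟪zs n ξ, η⟫)‖ ≤ M * ‖ξ‖ * ‖η‖ := by
    intro ξ η
    exact le_of_tendsto (key ξ η).norm (Filter.Eventually.of_forall (hib ξ η))
  let L : H → (H →L[ℂ] ℂ) := fun ξ =>
    LinearMap.mkContinuous
      { toFun := fun η => limUnder (U : Filter ℕ) (fun n => ⟪zs n ξ, η⟫)
        map_add' := hLadd ξ
        map_smul' := fun r η => hLsmul ξ r η }
      (M * ‖ξ‖) (fun η => by simpa using hLbound ξ η)
  let w : H → H := fun ξ => (InnerProductSpace.toDual ℂ H).symm (L ξ)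
  have hw : ∀ ξ η : H, ⟪w ξ, η⟫ = limUnder (U : Filter ℕ) (fun n => ⟪zs n ξ, η⟫) := by
    intro ξ η
    simp only [w]
    rw [InnerProductSpace.toDual_symm_apply]
    rfl
  have hwt : ∀ ξ η : H, Tendsto (fun n => ⟪zs n ξ, η⟫) (U : Filter ℕ) (𝓝 ⟪w ξ, η⟫) := by
    intro ξ η; rw [hw]; exact key ξ η
  have hwadd : ∀ ξ ξ' : H, w (ξ + ξ') = w ξ + w ξ' := by
    intro ξ ξ'
    refine ext_inner_right ℂ fun η => ?_
    rw [inner_add_left]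
    refine tendsto_nhds_unique (hwt (ξ + ξ') η) ?_
    simpa [map_add, inner_add_left] using (hwt ξ η).add (hwt ξ' η)
  have hwsmul : ∀ (r : ℂ) (ξ : H), w (r • ξ) = r • w ξ := by
    intro r ξ
    refine ext_inner_right ℂ fun η => ?_
    rw [inner_smul_left]
    refine tendsto_nhds_unique (hwt (r • ξ) η) ?_
    exact ((hwt ξ η).const_mul (starRingEnd ℂ r)).congr fun n => by
      simp only [map_smul, inner_smul_left]
  have hwb : ∀ ξ : H, ‖w ξ‖ ≤ M * ‖ξ‖ := by
    intro ξ
    have h1 : ‖w ξ‖ = ‖L ξ‖ := (InnerProductSpace.toDual ℂ H).symm.norm_map _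
    rw [h1]
    exact LinearMap.mkContinuous_norm_le _ (by positivity) _
  let z : H →L[ℂ] H :=
    LinearMap.mkContinuous
      { toFun := w, map_add' := hwadd, map_smul' := hwsmul } M hwb
  have hzt : ∀ ξ η : H, Tendsto (fun n => ⟪zs n ξ, η⟫) (U : Filter ℕ) (𝓝 ⟪z ξ, η⟫) := hwt
  refine ⟨z, ?_, ?_⟩
  · -- z ∈ centralizer S
    intro a ha
    ext ξ
    refine ext_inner_right ℂ fun η => ?_
    have hcomm : ∀ n : ℕ, a * zs n = zs n * a := fun n => hzs n a ha
    have h1 : (fun n => ⟪zs n (a ξ), η⟫) = fun n => ⟪zs n ξ, ContinuousLinearMap.adjoint a η⟫ := by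
      funext n
      rw [ContinuousLinearMap.adjoint_inner_right]
      have : a (zs n ξ) = zs n (a ξ) := by
        have := congrArg (fun T : H →L[ℂ] H => T ξ) (hcomm n)
        simpa using this
      rw [this]
    have T1 : Tendsto (fun n => ⟪zs n (a ξ), η⟫) (U : Filter ℕ) (𝓝 ⟪z (a ξ), η⟫) :=
      hzt (a ξ) η
    have T2 : Tendsto (fun n => ⟪zs n (a ξ), η⟫) (U : Filter ℕ)
        (𝓝 ⟪z ξ, ContinuousLinearMap.adjoint a η⟫) := by
      rw [h1]; exact hzt ξ (ContinuousLinearMap.adjoint a η)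
    have h2 : ⟪z (a ξ), η⟫ = ⟪z ξ, ContinuousLinearMap.adjoint a η⟫ :=
      tendsto_nhds_unique T1 T2
    calc ⟪(a * z) ξ, η⟫ = ⟪a (z ξ), η⟫ := rfl
      _ = ⟪z ξ, ContinuousLinearMap.adjoint a η⟫ :=
          (ContinuousLinearMap.adjoint_inner_right _ _ _).symm
      _ = ⟪z (a ξ), η⟫ := h2.symm
      _ = ⟪(z * a) ξ, η⟫ := rfl
  · -- ‖y - z‖ ≤ c
    have hub : ∀ ξ η : H, ‖⟪(y - z) ξ, η⟫‖ ≤ c * ‖ξ‖ * ‖η‖ := by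
      intro ξ η
      have T : Tendsto (fun n => ⟪(y - zs n) ξ, η⟫) (U : Filter ℕ) (𝓝 ⟪(y - z) ξ, η⟫) := by
        have : (fun n => ⟪(y - zs n) ξ, η⟫) = fun n => ⟪y ξ, η⟫ - ⟪zs n ξ, η⟫ := by
          funext n; simp [ContinuousLinearMap.sub_apply, inner_sub_left]
        rw [this]
        have := (tendsto_const_nhds (x := ⟪y ξ, η⟫) (f := (U : Filter ℕ))).sub (hzt ξ η)
        simpa [ContinuousLinearMap.sub_apply, inner_sub_left] using this
      have Tb : Tendsto (fun n : ℕ => (c + 1 / (n + 1)) * ‖ξ‖ * ‖η‖) (U : Filter ℕ)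
          (𝓝 (c * ‖ξ‖ * ‖η‖)) := by
        have h0 : Tendsto (fun n : ℕ => (1 : ℝ) / (n + 1)) atTop (𝓝 0) :=
          tendsto_one_div_add_atTop_nhds_zero_nat
        have h1 : Tendsto (fun n : ℕ => (c + 1 / (n + 1)) * ‖ξ‖ * ‖η‖) atTop
            (𝓝 ((c + 0) * ‖ξ‖ * ‖η‖)) :=
          (((tendsto_const_nhds.add h0)).mul_const ‖ξ‖).mul_const ‖η‖
        rw [add_zero] at h1
        exact h1.mono_left hUle
      refine le_of_tendsto_of_tendsto' T.norm Tb fun n => ?_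
      calc ‖⟪(y - zs n) ξ, η⟫‖ ≤ ‖(y - zs n) ξ‖ * ‖η‖ := norm_inner_le_norm _ _
        _ ≤ (‖y - zs n‖ * ‖ξ‖) * ‖η‖ :=
            mul_le_mul_of_nonneg_right ((y - zs n).le_opNorm ξ) (norm_nonneg _)
        _ ≤ ((c + 1 / (n + 1)) * ‖ξ‖) * ‖η‖ := by
            have := hzn n
            gcongr
        _ = (c + 1 / (n + 1)) * ‖ξ‖ * ‖η‖ := by ring
    refine ContinuousLinearMap.opNorm_le_bound _ hc fun ξ => ?_
    set v := (y - z) ξ with hv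
    have h1 : ‖⟪v, v⟫‖ ≤ c * ‖ξ‖ * ‖v‖ := hub ξ v
    have h2 : ‖⟪v, v⟫‖ = ‖v‖ * ‖v‖ := by
      rw [inner_self_eq_norm_sq_to_K]
      simp [norm_pow, sq]
    rw [h2] at h1
    rcases eq_or_lt_of_le (norm_nonneg v) with h0 | h0
    · rw [← h0]; positivity
    · have := le_of_mul_le_mul_right h1 h0
      linarith

/-- If `A ⊆_γ B` and `A` has property `LD_k`, then `B' ⊆_{2kγ} A'`. -/
theorem stmt_15 (A B : NonUnitalStarSubalgebra ℂ (H →L[ℂ] H))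
    (hA : IsClosed (A : Set (H →L[ℂ] H))) (hB : IsClosed (B : Set (H →L[ℂ] H)))
    (γ k : ℝ) (hγ : 0 ≤ γ) (hk : 0 < k)
    (hnear : ∀ a ∈ A, ∃ b ∈ B, ‖a - b‖ ≤ γ * ‖a‖)
    (hLD : HasLD (A : Set (H →L[ℂ] H)) k) :
    ∀ y ∈ Set.centralizer (B : Set (H →L[ℂ] H)),
      ∃ z ∈ Set.centralizer (A : Set (H →L[ℂ] H)), ‖y - z‖ ≤ 2 * k * γ * ‖y‖ := by
  intro y hy
  -- Step 1: ‖ad(y)|_A‖ ≤ 2γ‖y‖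
  have hderiv : derivRestrictNorm (A : Set (H →L[ℂ] H)) y ≤ 2 * γ * ‖y‖ := by
    unfold derivRestrictNorm
    apply Real.sSup_le
    · rintro r ⟨a, ⟨haA, hab⟩, rfl⟩
      show ‖y * a - a * y‖ ≤ 2 * γ * ‖y‖
      have ha1 : ‖a‖ ≤ 1 := by
        simpa [Metric.mem_closedBall, dist_zero_right] using hab
      obtain ⟨b, hbB, hb⟩ := hnear a haA
      have hyb : b * y = y * b := hy b hbB
      have heq : y * a - a * y = y * (a - b) - (a - b) * y := by
        rw [mul_sub, sub_mul]
        rw [← hyb]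
        abel
      rw [heq]
      have hab' : ‖a - b‖ ≤ γ := by
        have : γ * ‖a‖ ≤ γ * 1 := mul_le_mul_of_nonneg_left ha1 hγ
        linarith [hb]
      calc ‖y * (a - b) - (a - b) * y‖ ≤ ‖y * (a - b)‖ + ‖(a - b) * y‖ := norm_sub_le _ _
        _ ≤ ‖y‖ * ‖a - b‖ + ‖a - b‖ * ‖y‖ := by
            gcongr <;> [exact norm_mul_le _ _; exact norm_mul_le _ _]
        _ ≤ ‖y‖ * γ + γ * ‖y‖ := by
            gcongr <;> exact hab'
        _ = 2 * γ * ‖y‖ := by ring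
    · positivity
  -- Step 2: infDist y A' ≤ 2kγ‖y‖
  have hdist : Metric.infDist y (Set.centralizer (A : Set (H →L[ℂ] H))) ≤ 2 * k * γ * ‖y‖ := by
    calc Metric.infDist y (Set.centralizer (A : Set (H →L[ℂ] H)))
        ≤ k * derivRestrictNorm (A : Set (H →L[ℂ] H)) y := hLD y
      _ ≤ k * (2 * γ * ‖y‖) := mul_le_mul_of_nonneg_left hderiv hk.le
      _ = 2 * k * γ * ‖y‖ := by ring
  -- Step 3: extract an actual element via the ultrafilter limit lemma
  have hcne : (Set.centralizer (A : Set (H →L[ℂ] H))).Nonempty :=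
    ⟨0, fun m _ => by simp⟩
  refine exists_commuting_approx _ y (2 * k * γ * ‖y‖) (by positivity) fun n => ?_
  have hlt : Metric.infDist y (Set.centralizer (A : Set (H →L[ℂ] H)))
      < 2 * k * γ * ‖y‖ + 1 / (n + 1) := by
    have : (0 : ℝ) < 1 / (n + 1) := by positivity
    linarith
  obtain ⟨z, hzA, hzd⟩ := (Metric.infDist_lt_iff hcne).1 hlt
  exact ⟨z, hzA, by rw [← dist_eq_norm]; exact hzd.le⟩
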